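/- Let n ≥ 2 and γ = 2^{1/n}. Every nonzero eigenvalue λ = Σ_{j=1}^n (γ^{j−1} m_j)² with m⃗ ∈ ℕ₀ⁿ can be written as λ = γ^{2k} λ₀ for some k ∈ ℕ₀ and some m⃗' ∈ ℕ₀ⁿ with odd first coordinate m'₁ such that λ₀ = Σ_{j=1}^n (γ^{j−1} m'_j)², and this representation (k, λ₀) is unique. -/

import Mathlib

open Finset Polynomial

lemma irrZ (n : ℕ) (hn : 1 ≤ n) : Irreducible (X ^ n - C (2:ℤ)) := by
  have hmon : (X ^ n - C (2:ℤ)).Monic := monic_X_pow_sub_C _ (by omega)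
  apply irreducible_of_eisenstein_criterion (P := Ideal.span {(2:ℤ)})
  · exact (Ideal.span_singleton_prime (by norm_num)).mpr Int.prime_two
  · rw [hmon.leadingCoeff, Ideal.mem_span_singleton]
    norm_num
  · intro i hi
    rw [degree_X_pow_sub_C (by omega)] at hi
    have hi' : i < n := by exact_mod_cast hi
    rw [coeff_sub, coeff_X_pow, coeff_C, Ideal.mem_span_singleton]
    rcases eq_or_ne i 0 with h | h
    · subst h; rw [if_neg (by omega), if_pos rfl]; norm_num
    · rw [if_neg (by exact fun hh => hi'.ne hh), if_neg h]; norm_num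
  · rw [degree_X_pow_sub_C (by omega)]
    exact_mod_cast Nat.pos_of_ne_zero (by omega)
  · rw [coeff_sub, coeff_X_pow, coeff_C, Ideal.span_singleton_pow, Ideal.mem_span_singleton]
    rw [if_neg (by omega), if_pos rfl]
    norm_num
  · exact hmon.isPrimitive

lemma irrQ (n : ℕ) (hn : 1 ≤ n) : Irreducible (X ^ n - C (2:ℚ)) := by
  have hprim := (monic_X_pow_sub_C (2:ℤ) (by omega : n ≠ 0)).isPrimitive
  have h := (Polynomial.IsPrimitive.irreducible_iff_irreducible_map_fraction_map (K := ℚ) hprim).mp (irrZ n hn)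
  rwa [Polynomial.map_sub, Polynomial.map_pow, map_X, map_C] at h

lemma minpoly_gamma (n : ℕ) (hn : 2 ≤ n) (γ : ℝ) (hγ : γ = (2:ℝ) ^ ((1:ℝ)/n))
    (hpow : γ ^ n = 2) : minpoly ℚ γ = X ^ n - C (2:ℚ) := by
  refine (minpoly.eq_of_irreducible_of_monic (irrQ n (by omega)) ?_
    (monic_X_pow_sub_C _ (by omega : n ≠ 0))).symm
  simp [hpow]

lemma gamma_pow (n : ℕ) (hn : 2 ≤ n) (γ : ℝ) (hγ : γ = (2:ℝ) ^ ((1:ℝ)/n)) :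
    γ ^ n = 2 := by
  rw [hγ, ← Real.rpow_natCast ((2:ℝ) ^ ((1:ℝ)/n)) n, ← Real.rpow_mul (by norm_num)]
  rw [one_div, inv_mul_cancel₀ (by positivity : (n:ℝ) ≠ 0), Real.rpow_one]

lemma gamma_pos (n : ℕ) (γ : ℝ) (hγ : γ = (2:ℝ) ^ ((1:ℝ)/n)) : 0 < γ := by
  rw [hγ]; positivity

lemma key_div (n : ℕ) (hn : 2 ≤ n) (γ : ℝ) (hγ : γ = (2:ℝ) ^ ((1:ℝ)/n))
    (d : ℕ → ℤ) (h : ∑ j ∈ range n, (d j : ℝ) * γ ^ (2*j) = 0) : 2 ∣ d 0 := by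
  have hpow := gamma_pow n hn γ hγ
  set f : ℤ[X] := ∑ j ∈ range n, C (d j) * X ^ (2*j) with hf
  have haev : aeval γ (f.map (algebraMap ℤ ℚ)) = 0 := by
    rw [hf]
    simp only [Polynomial.map_sum, Polynomial.map_mul, Polynomial.map_pow, map_C, map_X,
      map_sum, map_mul, map_pow, aeval_C, aeval_X]
    simp only [eq_intCast, map_intCast]
    exact h
  have hdvd : (X ^ n - C (2:ℚ)) ∣ f.map (algebraMap ℤ ℚ) := by
    rw [← minpoly_gamma n hn γ hγ hpow]
    exact minpoly.dvd ℚ γ haev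
  have hmapg : ((X ^ n - C (2:ℤ)).map (algebraMap ℤ ℚ)) = X ^ n - C (2:ℚ) := by
    rw [Polynomial.map_sub, Polynomial.map_pow, map_X, map_C]; norm_num
  have hdvdZ : (X ^ n - C (2:ℤ)) ∣ f := by
    rw [← Polynomial.map_dvd_map (algebraMap ℤ ℚ) (fun a b hab => by exact_mod_cast hab)
      (monic_X_pow_sub_C _ (by omega : n ≠ 0))]
    rwa [hmapg]
  obtain ⟨Q, hQ⟩ := hdvdZ
  have hev : f.eval 0 = d 0 := by
    rw [hf, Polynomial.eval_finset_sum]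
    rw [Finset.sum_eq_single_of_mem 0 (Finset.mem_range.mpr (by omega))]
    · simp
    · intro j _ hj
      simp [Nat.pos_of_ne_zero hj, zero_pow (by omega : 2*j ≠ 0)]
  have hev2 : f.eval 0 = -2 * Q.eval 0 := by
    rw [hQ, eval_mul, eval_sub, eval_pow, eval_X, eval_C, zero_pow (by omega : n ≠ 0)]
    ring
  exact ⟨-Q.eval 0, by omega⟩

lemma parity_lemma (n : ℕ) (hn : 2 ≤ n) (γ : ℝ) (hγ : γ = (2:ℝ) ^ ((1:ℝ)/n))
    (a b : ℕ → ℕ) (hodd : Odd (a 0))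
    (h : (∑ j ∈ range n, (γ ^ j * (a j : ℝ)) ^ 2) = ∑ j ∈ range n, (γ ^ j * (b j : ℝ)) ^ 2) :
    Odd (b 0) := by
  have hdvd : (2:ℤ) ∣ ((a 0 : ℤ)^2 - (b 0 : ℤ)^2) := by
    apply key_div n hn γ hγ (fun j => (a j : ℤ)^2 - (b j : ℤ)^2)
    have : ∀ c : ℕ → ℕ, ∑ j ∈ range n, ((c j : ℝ))^2 * γ ^ (2*j)
        = ∑ j ∈ range n, (γ ^ j * (c j : ℝ)) ^ 2 := by
      intro c
      refine Finset.sum_congr rfl fun j _ => ?_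
      rw [two_mul, pow_add]; ring
    push_cast
    have expand : ∑ x ∈ range n, ((a x : ℝ) ^ 2 - (b x : ℝ) ^ 2) * γ ^ (2 * x)
        = (∑ j ∈ range n, (a j : ℝ)^2 * γ ^ (2*j)) - ∑ j ∈ range n, (b j : ℝ)^2 * γ ^ (2*j) := by
      rw [← Finset.sum_sub_distrib]
      exact Finset.sum_congr rfl fun j _ => by ring
    rw [expand, this a, this b, h]
    ring
  obtain ⟨c, hc⟩ := hdvd
  have heven : Even ((a 0 : ℤ)^2 - (b 0 : ℤ)^2) := ⟨c, by linarith⟩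
  rw [Int.even_sub] at heven
  have ha2 : ¬ Even ((a 0 : ℤ)^2) := by
    rw [Int.even_pow]
    rintro ⟨h1, -⟩
    rw [Int.even_coe_nat] at h1
    exact (Nat.not_even_iff_odd.mpr hodd) h1
  have hb2 : ¬ Even ((b 0 : ℤ)^2) := fun hb => ha2 (heven.mpr hb)
  rw [Int.even_pow] at hb2
  push_neg at hb2
  rw [← Nat.not_even_iff_odd]
  intro hbe
  exact two_ne_zero (hb2 (Int.even_coe_nat _ |>.mpr hbe))

lemma peel_last {M : Type*} [AddCommMonoid M] (n : ℕ) (hn : 1 ≤ n) (f : ℕ → M) :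
    ∑ j ∈ range n, f j = (∑ j ∈ range (n-1), f j) + f (n-1) := by
  conv_lhs => rw [show n = n-1+1 from by omega]
  rw [Finset.sum_range_succ]

lemma peel_first {M : Type*} [AddCommMonoid M] (n : ℕ) (hn : 1 ≤ n) (f : ℕ → M) :
    ∑ j ∈ range n, f j = (∑ j ∈ range (n-1), f (j+1)) + f 0 := by
  conv_lhs => rw [show n = n-1+1 from by omega]
  rw [Finset.sum_range_succ']

lemma split_sum {M : Type*} [AddCommMonoid M] (n s : ℕ) (hs : s ≤ n) (f : ℕ → M) :
    ∑ j ∈ range n, f j = (∑ j ∈ range s, f j) + ∑ j ∈ range (n - s), f (s + j) := by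
  rw [Finset.range_eq_Ico, ← Finset.sum_Ico_consecutive _ (Nat.zero_le s) hs]
  congr 1
  · rw [Finset.range_eq_Ico]
  rw [Finset.sum_Ico_eq_sum_range, Finset.range_eq_Ico]

lemma exists_odd (n : ℕ) (hn : 2 ≤ n) (γ : ℝ) (hγ : γ = (2:ℝ) ^ ((1:ℝ)/n)) :
    ∀ N : ℕ, ∀ m : ℕ → ℕ, (∑ j ∈ range n, (m j)^2) ≤ N → (∃ j, j < n ∧ m j ≠ 0) →
    ∃ k : ℕ, ∃ m' : ℕ → ℕ, Odd (m' 0) ∧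
      (∑ j ∈ range n, (γ ^ j * (m j : ℝ)) ^ 2)
        = γ ^ (2*k) * ∑ j ∈ range n, (γ ^ j * (m' j : ℝ)) ^ 2 := by
  have hpow := gamma_pow n hn γ hγ
  intro N
  induction N using Nat.strong_induction_on with
  | _ N ih =>
    intro m hN hex
    obtain ⟨j0, hj0n, hj0⟩ := hex
    have hexists : ∃ t, m t ≠ 0 := ⟨j0, hj0⟩
    have htne : m (Nat.find hexists) ≠ 0 := Nat.find_spec hexists
    set t := Nat.find hexists with ht
    have htj0 : t ≤ j0 := by rw [ht]; exact Nat.find_le hj0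
    have htn : t < n := lt_of_le_of_lt htj0 hj0n
    have hzero : ∀ i, i < t → m i = 0 := by
      intro i hi
      by_contra hc
      have : t ≤ i := by rw [ht]; exact Nat.find_le hc
      omega
    set mh : ℕ → ℕ := fun j => if j < n - t then m (j + t) else 0 with hmh
    have hmh0 : mh 0 = m t := by
      simp only [hmh]
      rw [if_pos (by omega : 0 < n - t), zero_add]
    have hmhsq : (∑ j ∈ range n, (mh j)^2) ≤ ∑ j ∈ range n, (m j)^2 := by
      rw [split_sum n (n-t) (by omega) (fun j => (mh j)^2),
        split_sum n t (by omega) (fun j => (m j)^2)]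
      have e1 : ∀ j ∈ range (n - t), (mh j)^2 = m (t + j) ^2 := by
        intro j hj
        rw [Finset.mem_range] at hj
        simp only [hmh]
        rw [if_pos hj, (by omega : j + t = t + j)]
      have e2 : ∀ j ∈ range (n - (n-t)), (mh ((n-t) + j))^2 = 0 := by
        intro j hj
        simp only [hmh]
        rw [if_neg (by omega : ¬ (n - t + j < n - t))]
        simp
      rw [Finset.sum_congr rfl e1, Finset.sum_congr rfl e2]
      simp
    have hstep1 : (∑ j ∈ range n, (γ ^ j * (m j : ℝ)) ^ 2)
        = γ ^ (2*t) * ∑ j ∈ range n, (γ ^ j * (mh j : ℝ)) ^ 2 := by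
      rw [split_sum n t (by omega) (fun j => (γ ^ j * (m j : ℝ)) ^ 2),
        split_sum n (n-t) (by omega) (fun j => (γ ^ j * (mh j : ℝ)) ^ 2)]
      have z1 : ∑ j ∈ range t, (γ ^ j * (m j : ℝ)) ^ 2 = 0 :=
        Finset.sum_eq_zero fun j hj => by
          rw [Finset.mem_range] at hj; rw [hzero j hj]; simp
      have z2 : ∑ j ∈ range (n - (n-t)), (γ ^ ((n-t) + j) * (mh ((n-t)+j) : ℝ)) ^ 2 = 0 :=
        Finset.sum_eq_zero fun j hj => by
          simp only [hmh]
          rw [if_neg (by omega : ¬ (n - t + j < n - t))]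
          simp
      rw [z1, z2, zero_add, add_zero, Finset.mul_sum]
      refine Finset.sum_congr rfl fun j hj => ?_
      rw [Finset.mem_range] at hj
      simp only [hmh]
      rw [if_pos hj, (by omega : j + t = t + j), pow_add]
      ring
    rcases Nat.even_or_odd (m t) with hev | hodd
    · -- even case
      obtain ⟨u, hu⟩ := hev
      have hu0 : u ≠ 0 := by omega
      set mt : ℕ → ℕ := fun j => if j < n - 1 then mh (j+1) else if j = n - 1 then u else 0
        with hmt
      have hmtlt : ∀ j, j < n - 1 → mt j = mh (j+1) := by
        intro j hj; simp only [hmt]; rw [if_pos hj]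
      have hmtlast : mt (n-1) = u := by
        simp [hmt]
      have hstep2 : (∑ j ∈ range n, (γ ^ j * (mh j : ℝ)) ^ 2)
          = γ ^ 2 * ∑ j ∈ range n, (γ ^ j * (mt j : ℝ)) ^ 2 := by
        rw [peel_first n (by omega) (fun j => (γ ^ j * (mh j : ℝ)) ^ 2),
          peel_last n (by omega) (fun j => (γ ^ j * (mt j : ℝ)) ^ 2), mul_add, Finset.mul_sum]
        congr 1
        · refine Finset.sum_congr rfl fun j hj => ?_
          rw [Finset.mem_range] at hj
          rw [hmtlt j hj, pow_add]
          ring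
        · rw [hmtlast, hmh0, hu]
          have hne : γ ^ 2 * (γ ^ (n-1) * (u:ℝ)) ^ 2 = (γ ^ (n - 1 + 1)) ^ 2 * (u:ℝ)^2 := by
            rw [pow_add]; ring
          rw [hne, (by omega : n - 1 + 1 = n), hpow]
          push_cast
          ring
      have hmeas : (∑ j ∈ range n, (mt j)^2) < N := by
        have hA : (∑ j ∈ range n, (mt j)^2)
            = (∑ j ∈ range (n-1), (mh (j+1))^2) + u^2 := by
          rw [peel_last n (by omega) (fun j => (mt j)^2), hmtlast]
          congr 1
          exact Finset.sum_congr rfl fun j hj => by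
            rw [Finset.mem_range] at hj; rw [hmtlt j hj]
        have hB : (∑ j ∈ range n, (mh j)^2)
            = (∑ j ∈ range (n-1), (mh (j+1))^2) + (mh 0)^2 :=
          peel_first n (by omega) (fun j => (mh j)^2)
        have hu2 : u^2 + 3*u^2 ≤ (mh 0)^2 := by
          rw [hmh0, hu]; nlinarith
        have hu1 : 1 ≤ u^2 := Nat.one_le_iff_ne_zero.mpr (pow_ne_zero _ hu0)
        omega
      obtain ⟨k', m', hodd', heq'⟩ := ih (∑ j ∈ range n, (mt j)^2) hmeas mt (le_refl _)
        ⟨n-1, by omega, by rw [hmtlast]; exact hu0⟩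
      refine ⟨t + 1 + k', m', hodd', ?_⟩
      rw [hstep1, hstep2, heq']
      rw [(by ring : 2*(t+1+k') = 2*t + (2 + 2*k')), pow_add, pow_add]
      ring
    · exact ⟨t, mh, hmh0 ▸ hodd, hstep1⟩

lemma uniq_le (n : ℕ) (hn : 2 ≤ n) (γ : ℝ) (hγ : γ = (2:ℝ) ^ ((1:ℝ)/n))
    (k k' : ℕ) (a b : ℕ → ℕ) (ha : Odd (a 0)) (hb : Odd (b 0)) (hk : k ≤ k')
    (h : γ^(2*k) * (∑ j ∈ range n, (γ ^ j * (a j : ℝ))^2)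
       = γ^(2*k') * ∑ j ∈ range n, (γ ^ j * (b j : ℝ))^2) :
    k = k' := by
  have hpow := gamma_pow n hn γ hγ
  have hpos := gamma_pos n γ hγ
  set d := k' - k with hd
  have h2 : (∑ j ∈ range n, (γ ^ j * (a j : ℝ))^2)
      = γ^(2*d) * ∑ j ∈ range n, (γ ^ j * (b j : ℝ))^2 := by
    have e : γ^(2*k') = γ^(2*k) * γ^(2*d) := by
      rw [← pow_add]; congr 1; omega
    rw [e, mul_assoc] at h
    exact mul_left_cancel₀ (pow_ne_zero _ (ne_of_gt hpos)) h
  by_contra hne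
  have hd0 : 0 < d := by omega
  set q := d / n with hq
  set r := d % n with hr
  have hrn : r < n := by rw [hr]; exact Nat.mod_lt _ (by omega)
  have hdqr : d = n*q + r := by rw [hq, hr]; exact (Nat.div_add_mod d n).symm
  set c : ℕ → ℕ := fun j => if j < r then 2^q * (2 * b (j + (n - r))) else 2^q * b (j - r)
    with hc
  have hkey : γ^(2*d) * (∑ j ∈ range n, (γ ^ j * (b j:ℝ))^2)
      = ∑ j ∈ range n, (γ ^ j * (c j:ℝ))^2 := by
    have hgd : γ^(2*d) = (2:ℝ)^(2*q) * γ^(2*r) := by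
      rw [show 2*d = n*(2*q) + 2*r from by rw [hdqr]; ring, pow_add, pow_mul, hpow]
    rw [hgd, split_sum n (n-r) (by omega) (fun j => (γ ^ j * (b j:ℝ))^2),
      split_sum n r (by omega) (fun j => (γ ^ j * (c j:ℝ))^2)]
    have hpart1 : (2:ℝ)^(2*q) * γ^(2*r) * (∑ j ∈ range (n-r), (γ ^ j * (b j:ℝ))^2)
        = ∑ j ∈ range (n-r), (γ ^ (r+j) * (c (r+j):ℝ))^2 := by
      rw [Finset.mul_sum]
      refine Finset.sum_congr rfl fun j hj => ?_
      have hcv : c (r + j) = 2^q * b j := by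
        simp only [hc]
        rw [if_neg (by omega : ¬ (r + j < r)), (by omega : r + j - r = j)]
      rw [hcv, pow_add]
      push_cast
      ring
    have hpart2 : (2:ℝ)^(2*q) * γ^(2*r) * (∑ j ∈ range (n-(n-r)), (γ ^ ((n-r)+j) * (b ((n-r)+j):ℝ))^2)
        = ∑ j ∈ range r, (γ ^ j * (c j:ℝ))^2 := by
      rw [Finset.mul_sum]
      refine Finset.sum_congr (by congr 1; omega) fun j hj => ?_
      rw [Finset.mem_range] at hj
      have hcv : c j = 2^q * (2 * b (j + (n - r))) := by
        simp only [hc]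
        rw [if_pos hj]
      rw [hcv, (by omega : (n - r) + j = j + (n - r))]
      have h1 : γ^(2*r) * (γ^(j+(n-r)))^2 = 4 * (γ^j)^2 := by
        rw [← pow_mul, ← pow_mul, ← pow_add,
          (by omega : 2*r + (j + (n - r))*2 = n*2 + j*2), pow_add, pow_mul, pow_mul, hpow]
        norm_num
      have e2 : (2:ℝ)^(2*q) * γ^(2*r) * (γ^(j+(n-r)) * (b (j + (n-r)) : ℝ))^2
          = (2:ℝ)^(2*q) * (γ^(2*r) * (γ^(j+(n-r)))^2) * (b (j + (n-r)) : ℝ)^2 := by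
        ring
      rw [e2, h1]
      push_cast
      ring
    rw [mul_add, hpart1, hpart2]
    exact add_comm _ _
  have hodd_c : Odd (c 0) := parity_lemma n hn γ hγ a c ha (by rw [h2, hkey])
  have hceven : 2 ∣ c 0 := by
    rcases Nat.eq_zero_or_pos r with hr0 | hrpos
    · have hq1 : q ≠ 0 := fun h0 => by rw [h0, Nat.mul_zero] at hdqr; omega
      have hcv : c 0 = 2^q * b 0 := by
        simp only [hc]; rw [if_neg (by omega), hr0]
      rw [hcv]
      exact dvd_mul_of_dvd_left (dvd_pow_self 2 hq1) _
    · have hcv : c 0 = 2^q * (2 * b (0 + (n - r))) := by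
        simp only [hc]; rw [if_pos hrpos]
      rw [hcv]
      exact Dvd.dvd.mul_left (Dvd.intro _ rfl) _
  obtain ⟨w, hw⟩ := hodd_c
  omega

theorem stmt13 (n : ℕ) (hn : 2 ≤ n) (γ : ℝ) (hγ : γ = (2 : ℝ) ^ ((1 : ℝ) / n))
    (m : ℕ → ℕ)
    (hne : (∑ j ∈ Finset.range n, (γ ^ j * (m j : ℝ)) ^ 2) ≠ 0) :
    ∃ k : ℕ, ∃ lam0 : ℝ,
      (∃ m' : ℕ → ℕ, Odd (m' 0) ∧
        lam0 = ∑ j ∈ Finset.range n, (γ ^ j * (m' j : ℝ)) ^ 2) ∧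
      (∑ j ∈ Finset.range n, (γ ^ j * (m j : ℝ)) ^ 2) = γ ^ (2 * k) * lam0 ∧
      ∀ k' : ℕ, ∀ lam0' : ℝ,
        (∃ m' : ℕ → ℕ, Odd (m' 0) ∧
          lam0' = ∑ j ∈ Finset.range n, (γ ^ j * (m' j : ℝ)) ^ 2) →
        (∑ j ∈ Finset.range n, (γ ^ j * (m j : ℝ)) ^ 2) = γ ^ (2 * k') * lam0' →
        k' = k ∧ lam0' = lam0 := by
  have hpos := gamma_pos n γ hγ
  have hex : ∃ j, j < n ∧ m j ≠ 0 := by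
    by_contra hc
    push_neg at hc
    exact hne (Finset.sum_eq_zero fun j hj => by
      rw [hc j (Finset.mem_range.mp hj)]; simp)
  obtain ⟨k, m', hodd, heq⟩ := exists_odd n hn γ hγ (∑ j ∈ range n, (m j)^2) m le_rfl hex
  refine ⟨k, _, ⟨m', hodd, rfl⟩, heq, ?_⟩
  rintro k' lam0' ⟨b, hbodd, rfl⟩ heq'
  have hE : γ^(2*k) * (∑ j ∈ range n, (γ ^ j * (m' j : ℝ))^2)
      = γ^(2*k') * ∑ j ∈ range n, (γ ^ j * (b j : ℝ))^2 := by rw [← heq, ← heq']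
  have hkk : k = k' := by
    rcases le_total k k' with hle | hle
    · exact uniq_le n hn γ hγ k k' m' b hodd hbodd hle hE
    · exact (uniq_le n hn γ hγ k' k b m' hbodd hodd hle hE.symm).symm
  subst hkk
  refine ⟨rfl, ?_⟩
  exact (mul_left_cancel₀ (pow_ne_zero _ (ne_of_gt hpos)) hE).symm
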